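/- For single-machine scheduling with equal processing times p and release dates, the set of possible completion times over all active schedules has cardinality at most n². -/
import Mathlib

/-- Feasibility of a single-machine schedule with common processing time `p`
and release dates `r`. -/
def FeasibleSched {n : ℕ} (r : Fin n → ℝ) (p : ℝ) (S : Fin n → ℝ) : Prop :=
  (∀ j, r j ≤ S j) ∧ ∀ i j, i ≠ j → (S i + p ≤ S j ∨ S j + p ≤ S i)

/-- A schedule is active if no single job can start strictly earlier, keeping
all other start times fixed, while preserving feasibility. -/
def ActiveSched {n : ℕ} (r : Fin n → ℝ) (p : ℝ) (S : Fin n → ℝ) : Prop :=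
  FeasibleSched r p S ∧
    ∀ j t, t < S j → ¬ FeasibleSched r p (Function.update S j t)

lemma active_start {n : ℕ} {r : Fin n → ℝ} {p : ℝ} {S : Fin n → ℝ}
    (hp : 0 < p) (hA : ActiveSched r p S) (j : Fin n) :
    S j = r j ∨ ∃ k, S k < S j ∧ S j = S k + p := by
  by_contra h
  push_neg at h
  obtain ⟨h1, h2⟩ := h
  set F : Finset ℝ :=
    insert (r j) ((Finset.univ.filter (fun k => S k + p ≤ S j)).image (fun k => S k + p)) with hF
  have hne : F.Nonempty := ⟨r j, Finset.mem_insert_self _ _⟩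
  set t := F.max' hne with ht
  have hrj : r j ≤ S j := hA.1.1 j
  have hmem : ∀ x ∈ F, x < S j := by
    intro x hx
    rw [hF] at hx
    rcases Finset.mem_insert.mp hx with hx | hx
    · subst hx
      exact lt_of_le_of_ne hrj (fun e => h1 e.symm)
    · obtain ⟨k, hk, rfl⟩ := Finset.mem_image.mp hx
      have hkle : S k + p ≤ S j := (Finset.mem_filter.mp hk).2
      have hklt : S k < S j := lt_of_lt_of_le (by linarith) hkle
      exact lt_of_le_of_ne hkle (fun e => h2 k hklt e.symm)
  have htlt : t < S j := hmem t (F.max'_mem hne)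
  apply hA.2 j t htlt
  constructor
  · intro m
    rcases eq_or_ne m j with rfl | hm
    · rw [Function.update_self]
      exact F.le_max' _ (Finset.mem_insert_self _ _)
    · rw [Function.update_of_ne hm]
      exact hA.1.1 m
  · intro a b hab
    rcases eq_or_ne a j with rfl | ha
    · rw [Function.update_self, Function.update_of_ne (Ne.symm hab)]
      rcases hA.1.2 a b hab with hc | hc
      · left; linarith
      · right
        exact F.le_max' _ (Finset.mem_insert_of_mem (Finset.mem_image.mpr
          ⟨b, Finset.mem_filter.mpr ⟨Finset.mem_univ _, hc⟩, rfl⟩))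
    · rw [Function.update_of_ne ha]
      rcases eq_or_ne b j with rfl | hb
      · rw [Function.update_self]
        rcases hA.1.2 a b hab with hc | hc
        · left
          exact F.le_max' _ (Finset.mem_insert_of_mem (Finset.mem_image.mpr
            ⟨a, Finset.mem_filter.mpr ⟨Finset.mem_univ _, hc⟩, rfl⟩))
        · right; linarith
      · rw [Function.update_of_ne hb]
        exact hA.1.2 a b hab

lemma active_form {n : ℕ} {r : Fin n → ℝ} {p : ℝ} {S : Fin n → ℝ}
    (hp : 0 < p) (hA : ActiveSched r p S) :
    ∀ m (j : Fin n), (Finset.univ.filter (fun k => S k < S j)).card ≤ m →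
      ∃ i, ∃ l : ℕ, l ≤ (Finset.univ.filter (fun k => S k < S j)).card ∧
        S j = r i + l * p := by
  intro m
  induction m with
  | zero =>
    intro j hc
    rcases active_start hp hA j with he | ⟨k, hk, _⟩
    · exact ⟨j, 0, by simp, by simp [he]⟩
    · exfalso
      have : k ∈ Finset.univ.filter (fun k => S k < S j) := by
        simp [hk]
      have := Finset.card_pos.mpr ⟨k, this⟩
      omega
  | succ m ih =>
    intro j hc
    rcases active_start hp hA j with he | ⟨k, hk, he⟩
    · exact ⟨j, 0, by simp, by simp [he]⟩
    · have hsub : Finset.univ.filter (fun a => S a < S k) ⊂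
          Finset.univ.filter (fun a => S a < S j) := by
        constructor
        · intro a ha
          simp only [Finset.mem_filter, Finset.mem_univ, true_and] at ha ⊢
          exact ha.trans hk
        · intro hsub
          have : k ∈ Finset.univ.filter (fun a => S a < S k) := hsub (by simp [hk])
          simp at this
      have hlt := Finset.card_lt_card hsub
      obtain ⟨i, l, hl, hform⟩ := ih k (by omega)
      exact ⟨i, l + 1, by omega, by push_cast; rw [he, hform]; ring⟩

/-- The set of possible completion times over all active schedules has
cardinality at most `n²`. -/
theorem card_completion_times_le {n : ℕ} (r : Fin n → ℝ) (p : ℝ)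
    (hp : 0 < p) (hr : ∀ j, 0 ≤ r j) :
    Set.ncard {t : ℝ | ∃ S : Fin n → ℝ, ActiveSched r p S ∧
      ∃ j : Fin n, t = S j + p} ≤ n ^ 2 := by
  classical
  set T : Finset ℝ :=
    (Finset.univ : Finset (Fin n × Fin n)).image (fun q => r q.1 + ((q.2 : ℕ) + 1) * p)
    with hT
  have hsub : {t : ℝ | ∃ S : Fin n → ℝ, ActiveSched r p S ∧
      ∃ j : Fin n, t = S j + p} ⊆ ↑T := by
    rintro t ⟨S, hA, j, rfl⟩
    have hcard : (Finset.univ.filter (fun k => S k < S j)).card < n := by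
      have hssub : Finset.univ.filter (fun k => S k < S j) ⊂ Finset.univ := by
        refine Finset.ssubset_univ_iff.mpr ?_
        intro he
        have : j ∈ Finset.univ.filter (fun k => S k < S j) := by
          rw [he]; exact Finset.mem_univ j
        simp at this
      simpa [Finset.card_univ] using Finset.card_lt_card hssub
    obtain ⟨i, l, hl, hform⟩ := active_form hp hA
      (Finset.univ.filter (fun k => S k < S j)).card j le_rfl
    have hln : l < n := lt_of_le_of_lt hl hcard
    rw [hT]
    refine Finset.mem_coe.mpr (Finset.mem_image.mpr ⟨(i, ⟨l, hln⟩), Finset.mem_univ _, ?_⟩)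
    simp only
    rw [hform]; push_cast; ring
  calc Set.ncard _ ≤ Set.ncard (↑T : Set ℝ) :=
        Set.ncard_le_ncard hsub T.finite_toSet
    _ = T.card := Set.ncard_coe_finset T
    _ ≤ (Finset.univ : Finset (Fin n × Fin n)).card := Finset.card_image_le
    _ = n ^ 2 := by simp [Finset.card_univ, sq]
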